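/- Suppose the map T(x,y) = (g(y)+h(x+y), -f(x)-h(x+y)) has an inverse of the form T⁻¹(X,Y) = (G(Y)+H(X+Y), -F(X)-H(X+Y)) with all functions twice differentiable and g', f', h' nonvanishing. Then, writing u = 1/f', v = 1/g', w = 1/h', the identity [v(y)+w(x+y)]u'(x) + [u(x)+w(x+y)]v'(y) = [u(x)+v(y)]w'(x+y) holds for all x, y. -/

import Mathlib

/-- If the map `T(x,y) = (g(y)+h(x+y), -f(x)-h(x+y))` has an inverse of the form
`T⁻¹(X,Y) = (G(Y)+H(X+Y), -F(X)-H(X+Y))` with all functions twice differentiable and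
`f', g', h'` nonvanishing, then `u = 1/f'`, `v = 1/g'`, `w = 1/h'` satisfy
`(v(y)+w(x+y))u'(x) + (u(x)+w(x+y))v'(y) = (u(x)+v(y))w'(x+y)`. -/
theorem stmt_1 (f g h F G H : ℝ → ℝ)
    (hf : Differentiable ℝ f) (hf' : Differentiable ℝ (deriv f))
    (hg : Differentiable ℝ g) (hg' : Differentiable ℝ (deriv g))
    (hh : Differentiable ℝ h) (hh' : Differentiable ℝ (deriv h))
    (hF : Differentiable ℝ F) (hF' : Differentiable ℝ (deriv F))
    (hG : Differentiable ℝ G) (hG' : Differentiable ℝ (deriv G))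
    (hH : Differentiable ℝ H) (hH' : Differentiable ℝ (deriv H))
    (hfne : ∀ x, deriv f x ≠ 0) (hgne : ∀ y, deriv g y ≠ 0) (hhne : ∀ z, deriv h z ≠ 0)
    (hLI : Function.LeftInverse
      (fun P : ℝ × ℝ => (G P.2 + H (P.1 + P.2), -F P.1 - H (P.1 + P.2)))
      (fun p : ℝ × ℝ => (g p.2 + h (p.1 + p.2), -f p.1 - h (p.1 + p.2))))
    (hRI : Function.RightInverse
      (fun P : ℝ × ℝ => (G P.2 + H (P.1 + P.2), -F P.1 - H (P.1 + P.2)))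
      (fun p : ℝ × ℝ => (g p.2 + h (p.1 + p.2), -f p.1 - h (p.1 + p.2)))) :
    ∀ x y : ℝ,
      (1 / deriv g y + 1 / deriv h (x + y)) * deriv (fun x' => 1 / deriv f x') x
      + (1 / deriv f x + 1 / deriv h (x + y)) * deriv (fun y' => 1 / deriv g y') y
      = (1 / deriv f x + 1 / deriv g y) * deriv (fun z' => 1 / deriv h z') (x + y) := by
  -- basic composed derivatives
  have Hhx : ∀ (x y : ℝ), HasDerivAt (fun x => h (x + y)) (deriv h (x + y)) x := by
    intro x y
    simpa [Function.comp_def] using ((hh (x + y)).hasDerivAt.comp x ((hasDerivAt_id x).add_const y))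
  have Hhy : ∀ (x y : ℝ), HasDerivAt (fun y => h (x + y)) (deriv h (x + y)) y := by
    intro x y
    simpa [Function.comp_def] using ((hh (x + y)).hasDerivAt.comp y ((hasDerivAt_id y).const_add x))
  have Hh'x : ∀ (x y : ℝ), HasDerivAt (fun x => deriv h (x + y)) (deriv (deriv h) (x + y)) x := by
    intro x y
    simpa [Function.comp_def] using ((hh' (x + y)).hasDerivAt.comp x ((hasDerivAt_id x).add_const y))
  have Hh'y : ∀ (x y : ℝ), HasDerivAt (fun y => deriv h (x + y)) (deriv (deriv h) (x + y)) y := by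
    intro x y
    simpa [Function.comp_def] using ((hh' (x + y)).hasDerivAt.comp y ((hasDerivAt_id y).const_add x))
  have HBx : ∀ (x y : ℝ), HasDerivAt (fun x => -f x - h (x + y))
      (-deriv f x - deriv h (x + y)) x :=
    fun x y => ((hf x).hasDerivAt.neg).sub (Hhx x y)
  have HBy : ∀ (x y : ℝ), HasDerivAt (fun y => -f x - h (x + y)) (-deriv h (x + y)) y := by
    intro x y
    simpa using (Hhy x y).const_sub (-f x)
  have HCx : ∀ (x y : ℝ), HasDerivAt (fun x => g y - f x) (-deriv f x) x :=
    fun x y => (hf x).hasDerivAt.const_sub (g y)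
  have HCy : ∀ (x y : ℝ), HasDerivAt (fun y => g y - f x) (deriv g y) y :=
    fun x y => (hg y).hasDerivAt.sub_const (f x)
  -- the pointwise inverse identity (first component)
  have key1 : ∀ x y : ℝ, G (-f x - h (x + y)) + H (g y - f x) = x := by
    intro x y
    have h1 := hLI (x, y)
    simp only [Prod.mk.injEq] at h1
    rw [show g y + h (x + y) + (-f x - h (x + y)) = g y - f x from by ring] at h1
    exact h1.1
  -- differentiate key1 in x
  have eqA : ∀ x y : ℝ,
      deriv G (-f x - h (x + y)) * (-deriv f x - deriv h (x + y))
        + deriv H (g y - f x) * (-deriv f x) = 1 := by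
    intro x y
    have dG : HasDerivAt (fun x => G (-f x - h (x + y)))
        (deriv G (-f x - h (x + y)) * (-deriv f x - deriv h (x + y))) x := by
      simpa [Function.comp_def] using (hG (-f x - h (x + y))).hasDerivAt.comp x (HBx x y)
    have dH : HasDerivAt (fun x => H (g y - f x))
        (deriv H (g y - f x) * (-deriv f x)) x := by
      simpa [Function.comp_def] using (hH (g y - f x)).hasDerivAt.comp x (HCx x y)
    have d1 : HasDerivAt (fun x : ℝ => G (-f x - h (x + y)) + H (g y - f x)) _ x := dG.add dH
    have d2 : (fun x : ℝ => G (-f x - h (x + y)) + H (g y - f x)) = fun x => x :=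
      funext fun x => key1 x y
    rw [d2] at d1
    exact d1.unique (hasDerivAt_id x)
  -- differentiate key1 in y
  have eqB : ∀ x y : ℝ,
      deriv G (-f x - h (x + y)) * (-deriv h (x + y))
        + deriv H (g y - f x) * deriv g y = 0 := by
    intro x y
    have dG : HasDerivAt (fun y => G (-f x - h (x + y)))
        (deriv G (-f x - h (x + y)) * (-deriv h (x + y))) y := by
      simpa [Function.comp_def] using (hG (-f x - h (x + y))).hasDerivAt.comp y (HBy x y)
    have dH : HasDerivAt (fun y => H (g y - f x))
        (deriv H (g y - f x) * deriv g y) y := by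
      simpa [Function.comp_def] using (hH (g y - f x)).hasDerivAt.comp y (HCy x y)
    have d1 : HasDerivAt (fun y : ℝ => G (-f x - h (x + y)) + H (g y - f x)) _ y := dG.add dH
    have d2 : (fun y : ℝ => G (-f x - h (x + y)) + H (g y - f x)) = fun _ => x :=
      funext fun y => key1 x y
    rw [d2] at d1
    exact d1.unique (hasDerivAt_const y x)
  -- solve for H'
  have keyH : ∀ x y : ℝ,
      deriv H (g y - f x)
        * (deriv f x * deriv g y + deriv g y * deriv h (x + y)
            + deriv f x * deriv h (x + y))
      = -deriv h (x + y) := by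
    intro x y
    linear_combination (-deriv h (x + y)) * eqA x y
      + (deriv f x + deriv h (x + y)) * eqB x y
  -- differentiate keyH in x
  have eqX : ∀ x y : ℝ,
      deriv (deriv H) (g y - f x) * (-deriv f x)
          * (deriv f x * deriv g y + deriv g y * deriv h (x + y)
              + deriv f x * deriv h (x + y))
        + deriv H (g y - f x)
          * (deriv (deriv f) x * deriv g y + deriv g y * deriv (deriv h) (x + y)
              + (deriv (deriv f) x * deriv h (x + y)
                  + deriv f x * deriv (deriv h) (x + y)))
      = -deriv (deriv h) (x + y) := by
    intro x y
    have p1 : HasDerivAt (fun x => deriv H (g y - f x))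
        (deriv (deriv H) (g y - f x) * (-deriv f x)) x := by
      simpa [Function.comp_def] using (hH' (g y - f x)).hasDerivAt.comp x (HCx x y)
    have p2 : HasDerivAt (fun x => deriv f x * deriv g y + deriv g y * deriv h (x + y)
        + deriv f x * deriv h (x + y))
        (deriv (deriv f) x * deriv g y + deriv g y * deriv (deriv h) (x + y)
          + (deriv (deriv f) x * deriv h (x + y) + deriv f x * deriv (deriv h) (x + y))) x :=
      (((hf' x).hasDerivAt.mul_const _).add ((Hh'x x y).const_mul _)).add
        ((hf' x).hasDerivAt.mul (Hh'x x y))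
    have d1 : HasDerivAt (fun x => deriv H (g y - f x)
        * (deriv f x * deriv g y + deriv g y * deriv h (x + y)
            + deriv f x * deriv h (x + y)))
        (deriv (deriv H) (g y - f x) * (-deriv f x)
          * (deriv f x * deriv g y + deriv g y * deriv h (x + y)
              + deriv f x * deriv h (x + y))
        + deriv H (g y - f x)
          * (deriv (deriv f) x * deriv g y + deriv g y * deriv (deriv h) (x + y)
              + (deriv (deriv f) x * deriv h (x + y)
                  + deriv f x * deriv (deriv h) (x + y)))) x := p1.mul p2
    have d2 : (fun x => deriv H (g y - f x)
        * (deriv f x * deriv g y + deriv g y * deriv h (x + y)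
            + deriv f x * deriv h (x + y)))
        = fun x => -deriv h (x + y) := funext fun x => keyH x y
    rw [d2] at d1
    exact d1.unique (Hh'x x y).neg
  -- differentiate keyH in y
  have eqY : ∀ x y : ℝ,
      deriv (deriv H) (g y - f x) * deriv g y
          * (deriv f x * deriv g y + deriv g y * deriv h (x + y)
              + deriv f x * deriv h (x + y))
        + deriv H (g y - f x)
          * (deriv f x * deriv (deriv g) y
              + (deriv (deriv g) y * deriv h (x + y)
                  + deriv g y * deriv (deriv h) (x + y))
              + deriv f x * deriv (deriv h) (x + y))
      = -deriv (deriv h) (x + y) := by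
    intro x y
    have p1 : HasDerivAt (fun y => deriv H (g y - f x))
        (deriv (deriv H) (g y - f x) * deriv g y) y := by
      simpa [Function.comp_def] using (hH' (g y - f x)).hasDerivAt.comp y (HCy x y)
    have p2 : HasDerivAt (fun y => deriv f x * deriv g y + deriv g y * deriv h (x + y)
        + deriv f x * deriv h (x + y))
        (deriv f x * deriv (deriv g) y
          + (deriv (deriv g) y * deriv h (x + y) + deriv g y * deriv (deriv h) (x + y))
          + deriv f x * deriv (deriv h) (x + y)) y :=
      (((hg' y).hasDerivAt.const_mul _).add ((hg' y).hasDerivAt.mul (Hh'y x y))).add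
        ((Hh'y x y).const_mul _)
    have d1 : HasDerivAt (fun y => deriv H (g y - f x)
        * (deriv f x * deriv g y + deriv g y * deriv h (x + y)
            + deriv f x * deriv h (x + y)))
        (deriv (deriv H) (g y - f x) * deriv g y
          * (deriv f x * deriv g y + deriv g y * deriv h (x + y)
              + deriv f x * deriv h (x + y))
        + deriv H (g y - f x)
          * (deriv f x * deriv (deriv g) y
              + (deriv (deriv g) y * deriv h (x + y)
                  + deriv g y * deriv (deriv h) (x + y))
              + deriv f x * deriv (deriv h) (x + y))) y := p1.mul p2
    have d2 : (fun y => deriv H (g y - f x)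
        * (deriv f x * deriv g y + deriv g y * deriv h (x + y)
            + deriv f x * deriv h (x + y)))
        = fun y => -deriv h (x + y) := funext fun y => keyH x y
    rw [d2] at d1
    exact d1.unique (Hh'y x y).neg
  -- finish
  intro x y
  have ha := hfne x
  have hb := hgne y
  have hc := hhne (x + y)
  have hu : deriv (fun x' => 1 / deriv f x') x = -deriv (deriv f) x / deriv f x ^ 2 := by
    have := ((hf' x).hasDerivAt.inv ha).deriv
    simpa [one_div, Pi.inv_def] using this
  have hv : deriv (fun y' => 1 / deriv g y') y = -deriv (deriv g) y / deriv g y ^ 2 := by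
    have := ((hg' y).hasDerivAt.inv hb).deriv
    simpa [one_div, Pi.inv_def] using this
  have hw : deriv (fun z' => 1 / deriv h z') (x + y)
      = -deriv (deriv h) (x + y) / deriv h (x + y) ^ 2 := by
    have := ((hh' (x + y)).hasDerivAt.inv hc).deriv
    simpa [one_div, Pi.inv_def] using this
  rw [hu, hv, hw]
  set a := deriv f x
  set b := deriv g y
  set c := deriv h (x + y)
  set a2 := deriv (deriv f) x
  set b2 := deriv (deriv g) y
  set c2 := deriv (deriv h) (x + y)
  have EX := eqX x y
  have EY := eqY x y
  have EK := keyH x y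
  have star : c * (b * (a2 * b + b * c2 + (a2 * c + a * c2))
      + a * (a * b2 + (b2 * c + b * c2) + a * c2))
      = (a + b) * c2 * (a * b + b * c + a * c) := by
    linear_combination (-b * (a * b + b * c + a * c)) * EX
      + (-a * (a * b + b * c + a * c)) * EY
      + (b * (a2 * b + b * c2 + (a2 * c + a * c2))
          + a * (a * b2 + (b2 * c + b * c2) + a * c2)) * EK
  field_simp
  linear_combination (-1 : ℝ) * star
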